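/- Let 0 < E < 1 and let y ≥ 2 be real with y^{1−E} ≥ 2. Let L be a squarefree positive integer each of whose prime factors p satisfies p ≤ y and P⁺(p − 1) ≤ y^{1−E}, where P⁺(n) denotes the largest prime factor of n. Then λ(L), the exponent of the multiplicative group (ℤ/Lℤ)ˣ, satisfies λ(L) ≤ y^{π(y^{1−E})}, where π(x) is the number of primes at most x. -/

import Mathlib

open Finset in
private lemma lcm_factorization_eq_sup (f : ℕ → ℕ) (s : Finset ℕ) (hf : ∀ p ∈ s, f p ≠ 0)
    (r : ℕ) : (s.lcm f).factorization r = s.sup fun p => (f p).factorization r := by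
  induction s using Finset.cons_induction with
  | empty => simp
  | cons a s ha ih =>
    have h1 : f a ≠ 0 := hf a (Finset.mem_cons_self a s)
    have h2 : s.lcm f ≠ 0 := by
      rw [Ne, Finset.lcm_eq_zero_iff]
      rintro ⟨p, hp, hp0⟩
      exact hf p (Finset.mem_cons_of_mem hp) hp0
    rw [show (Finset.cons a s ha).lcm f = lcm (f a) (s.lcm f) by
        rw [Finset.cons_eq_insert, Finset.lcm_insert],
      Finset.sup_cons]
    have : lcm (f a) (s.lcm f) = Nat.lcm (f a) (s.lcm f) := rfl
    rw [this, Nat.factorization_lcm h1 h2, Finsupp.sup_apply,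
      ih fun p hp => hf p (Finset.mem_cons_of_mem hp)]

/-- Bound on the Carmichael function `λ(L) = Monoid.exponent (ZMod L)ˣ` of a squarefree
`L` whose prime factors `p` satisfy `p ≤ y` and `P⁺(p − 1) ≤ y^{1−E}`. -/
theorem carmichael_lambda_bound (E : ℝ) (hE0 : 0 < E) (hE1 : E < 1)
    (y : ℝ) (hy : 2 ≤ y) (hy' : 2 ≤ y ^ (1 - E))
    (L : ℕ) (hL : 0 < L) (hsq : Squarefree L)
    (hfac : ∀ p ∈ L.primeFactors, (p : ℝ) ≤ y ∧
      ∀ r ∈ (p - 1).primeFactors, (r : ℝ) ≤ y ^ (1 - E)) :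
    (Monoid.exponent (ZMod L)ˣ : ℝ) ≤ y ^ (Nat.primeCounting ⌊y ^ (1 - E)⌋₊) := by
  set z := ⌊y ^ (1 - E)⌋₊ with hz
  set S := L.primeFactors with hSdef
  set f : ℕ → ℕ := fun p => p - 1 with hfdef
  have hf : ∀ p ∈ S, f p ≠ 0 := fun p hp =>
    Nat.sub_ne_zero_of_lt (Nat.prime_of_mem_primeFactors hp).one_lt
  set N := S.lcm f with hNdef
  have hN0 : N ≠ 0 := by
    rw [hNdef, Ne, Finset.lcm_eq_zero_iff]
    rintro ⟨p, hp, hp0⟩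
    exact hf p hp hp0
  -- Step 1: exponent divides N
  have hLprod : (∏ i : S, (i : ℕ)) = L := by
    exact (Finset.prod_coe_sort S (fun p => p)).trans (Nat.prod_primeFactors_of_squarefree hsq)
  have hcop : Pairwise (Function.onFun Nat.Coprime fun i : S => (i : ℕ)) := by
    intro i j hij
    exact (Nat.coprime_primes (Nat.prime_of_mem_primeFactors i.2)
      (Nat.prime_of_mem_primeFactors j.2)).mpr fun h => hij (Subtype.ext h)
  let e : ZMod L ≃+* Π i : S, ZMod i :=
    (ZMod.ringEquivCongr hLprod.symm).trans (ZMod.prodEquivPi _ hcop)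
  have hdvd : Monoid.exponent (ZMod L)ˣ ∣ N := by
    apply Monoid.exponent_dvd_of_forall_pow_eq_one
    intro u
    ext
    rw [Units.val_pow_eq_pow_val, Units.val_one]
    apply e.injective
    rw [map_pow, map_one]
    funext i
    haveI : Fact (Nat.Prime i) := ⟨Nat.prime_of_mem_primeFactors i.2⟩
    rw [Pi.pow_apply, Pi.one_apply]
    have hx : IsUnit (e (u : ZMod L) i) :=
      ((Units.isUnit u).map (e : ZMod L →+* Π i : S, ZMod i)).map
        (Pi.evalRingHom (fun i : S => ZMod i) i)
    have h1 : (e (u : ZMod L) i) ^ ((i : ℕ) - 1) = 1 :=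
      ZMod.pow_card_sub_one_eq_one hx.ne_zero
    obtain ⟨c, hc⟩ : f i ∣ N := Finset.dvd_lcm i.2
    rw [hc, pow_mul]
    show (e (u : ZMod L) i ^ ((i : ℕ) - 1)) ^ c = 1
    rw [h1, one_pow]
  -- key divisibility fact
  have key : ∀ r ∈ N.primeFactors, ∃ p ∈ S, r ^ N.factorization r ∣ p - 1 := by
    intro r hr
    have hSne : S.Nonempty := by
      rcases Finset.eq_empty_or_nonempty S with h | h
      · exfalso
        rw [h, Finset.lcm_empty] at hNdef
        rw [hNdef] at hr
        simp at hr
      · exact h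
    obtain ⟨p, hp, hpe⟩ := Finset.exists_mem_eq_sup S hSne fun p => (f p).factorization r
    refine ⟨p, hp, ?_⟩
    have := lcm_factorization_eq_sup f S hf r
    rw [← hNdef] at this
    rw [this, hpe]
    exact Nat.ordProj_dvd _ _
  -- Step 2: card of prime factors of N
  have hcard : N.primeFactors.card ≤ Nat.primeCounting z := by
    have hsub : N.primeFactors ⊆ Nat.primesBelow (z + 1) := by
      intro r hr
      obtain ⟨p, hp, hd⟩ := key r hr
      have hrp : r.Prime := Nat.prime_of_mem_primeFactors hr
      have hfpos : N.factorization r ≠ 0 := by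
        have := Nat.Prime.factorization_pos_of_dvd hrp hN0 (Nat.dvd_of_mem_primeFactors hr)
        omega
      have hrd : r ∣ p - 1 := dvd_trans (dvd_pow_self r hfpos) hd
      have hrm : r ∈ (p - 1).primeFactors := Nat.mem_primeFactors.mpr ⟨hrp, hrd, hf p hp⟩
      have hry : (r : ℝ) ≤ y ^ (1 - E) := (hfac p hp).2 r hrm
      exact Nat.mem_primesBelow.mpr ⟨Nat.lt_succ_of_le (Nat.le_floor hry), hrp⟩
    calc N.primeFactors.card ≤ (Nat.primesBelow (z + 1)).card := Finset.card_le_card hsub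
      _ = Nat.primeCounting' (z + 1) := Nat.primesBelow_card_eq_primeCounting' _
      _ = Nat.primeCounting z := rfl
  -- Step 3: N ≤ y ^ card
  have hy1 : (1 : ℝ) ≤ y := by linarith
  have hNle : (N : ℝ) ≤ y ^ N.primeFactors.card := by
    conv_lhs => rw [← Nat.factorization_prod_pow_eq_self hN0]
    rw [Nat.prod_factorization_eq_prod_primeFactors, Nat.cast_prod]
    calc (∏ r ∈ N.primeFactors, ((r ^ N.factorization r : ℕ) : ℝ))
        ≤ ∏ r ∈ N.primeFactors, y := by
          apply Finset.prod_le_prod (fun r _ => by positivity)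
          intro r hr
          obtain ⟨p, hp, hd⟩ := key r hr
          have h1 : r ^ N.factorization r ≤ p - 1 :=
            Nat.le_of_dvd (Nat.pos_of_ne_zero (hf p hp)) hd
          have h2 : ((r ^ N.factorization r : ℕ) : ℝ) ≤ (p : ℝ) := by
            exact_mod_cast le_trans h1 (Nat.sub_le p 1)
          exact le_trans h2 (hfac p hp).1
      _ = y ^ N.primeFactors.card := Finset.prod_const y
  -- combine
  have hexp : (Monoid.exponent (ZMod L)ˣ : ℝ) ≤ (N : ℝ) :=
    Nat.cast_le.mpr (Nat.le_of_dvd (Nat.pos_of_ne_zero hN0) hdvd)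
  calc (Monoid.exponent (ZMod L)ˣ : ℝ) ≤ (N : ℝ) := hexp
    _ ≤ y ^ N.primeFactors.card := hNle
    _ ≤ y ^ Nat.primeCounting z := pow_le_pow_right₀ hy1 hcard
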